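/- For a finite MDP M = (S, A, P, R, γ) with γ ∈ [0,1), let Q* be the unique fixed point of the Bellman optimality operator T and let π* : S → A be any deterministic policy that is greedy with respect to Q*, i.e., π*(s) ∈ argmax_{a∈A} Q*(s,a) for every s ∈ S. Then Q^{π*} = Q*, and for every deterministic policy π : S → A one has Q^π(s,a) ≤ Q*(s,a) for all (s,a) ∈ S × A; in particular there always exists a deterministic policy whose state-action value function is at least as large as that of any other deterministic policy at every state-action pair. -/

import Mathlib

open Filter Topology

/-- The Bellman optimality operator of a finite MDP `(S, A, P, R, γ)`. -/
noncomputable def bellman {S A : Type*} [Fintype S] [Fintype A]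
    (P : S → A → PMF S) (R : S → A → S → ℝ) (γ : ℝ) (Q : S × A → ℝ) : S × A → ℝ :=
  fun p => ∑ s' : S, ((P p.1 p.2) s').toReal * (R p.1 p.2 s' + γ * ⨆ a' : A, Q (s', a'))

/-- The policy-evaluation operator of a finite MDP for a deterministic policy `π : S → A`. -/
noncomputable def polEval {S A : Type*} [Fintype S]
    (P : S → A → PMF S) (R : S → A → S → ℝ) (γ : ℝ) (π : S → A)
    (Q : S × A → ℝ) : S × A → ℝ :=
  fun p => ∑ s' : S, ((P p.1 p.2) s').toReal * (R p.1 p.2 s' + γ * Q (s', π s'))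

lemma sum_pmf_toReal_one {S : Type*} [Fintype S] (p : PMF S) :
    ∑ s : S, (p s).toReal = 1 := by
  have h := p.tsum_coe
  rw [tsum_fintype] at h
  rw [← ENNReal.toReal_sum (fun s _ => PMF.apply_ne_top p s), h, ENNReal.toReal_one]

lemma key_contraction {S A : Type*} [Fintype S] [Fintype A] [Nonempty S] [Nonempty A]
    (P : S → A → PMF S) (R : S → A → S → ℝ) (γ : ℝ) (hγ0 : 0 ≤ γ) (hγ1 : γ < 1)
    (π : S → A) (Qp Qs : S × A → ℝ)
    (hQp : polEval P R γ π Qp = Qp)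
    (hQs : ∀ p, polEval P R γ π Qs p ≤ Qs p) :
    ∀ p, Qp p ≤ Qs p := by
  set f : S × A → ℝ := fun p => Qp p - Qs p with hf
  set M : ℝ := (Finset.univ : Finset (S × A)).sup' Finset.univ_nonempty f with hMdef
  have hle : ∀ p, f p ≤ M := fun p => Finset.le_sup' f (Finset.mem_univ p)
  obtain ⟨p0, _, hp0⟩ := Finset.exists_mem_eq_sup' (Finset.univ_nonempty (α := S × A)) f
  have h1 : Qp p0 - Qs p0 ≤ polEval P R γ π Qp p0 - polEval P R γ π Qs p0 := by
    rw [hQp]; linarith [hQs p0]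
  have h2 : polEval P R γ π Qp p0 - polEval P R γ π Qs p0
      = γ * ∑ s' : S, ((P p0.1 p0.2) s').toReal * (Qp (s', π s') - Qs (s', π s')) := by
    simp only [polEval]
    rw [Finset.mul_sum, ← Finset.sum_sub_distrib]
    apply Finset.sum_congr rfl
    intro s' _
    ring
  have h3 : ∑ s' : S, ((P p0.1 p0.2) s').toReal * (Qp (s', π s') - Qs (s', π s'))
      ≤ ∑ s' : S, ((P p0.1 p0.2) s').toReal * M :=
    Finset.sum_le_sum fun s' _ =>
      mul_le_mul_of_nonneg_left (hle (s', π s')) ENNReal.toReal_nonneg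
  have h4 : ∑ s' : S, ((P p0.1 p0.2) s').toReal * M = M := by
    rw [← Finset.sum_mul, sum_pmf_toReal_one, one_mul]
  have hMle : M ≤ γ * M := by
    have hMeq : M = f p0 := hMdef.trans hp0
    have h5 : γ * ∑ s' : S, ((P p0.1 p0.2) s').toReal * (Qp (s', π s') - Qs (s', π s'))
        ≤ γ * ∑ s' : S, ((P p0.1 p0.2) s').toReal * M :=
      mul_le_mul_of_nonneg_left h3 hγ0
    have hfle : f p0 ≤ γ * M := by
      have := h1.trans (le_of_eq h2)
      simp only [hf]
      rw [h4] at h5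
      linarith
    linarith
  have hM0 : M ≤ 0 := by nlinarith
  intro p
  have := (hle p).trans hM0
  simpa [hf] using this

/-- if `Q*` is the (unique) fixed point of the Bellman optimality operator,
`π*` is greedy with respect to `Q*`, and `Qpi π` denotes the (unique) fixed point of the
policy-evaluation operator `T^π` for each deterministic policy `π`, then `Q^{π*} = Q*`,
every deterministic policy `π` satisfies `Q^π ≤ Q*` pointwise, and in particular there is
a deterministic policy whose state-action value function dominates that of every other
deterministic policy at every state-action pair. -/
theorem greedy_policy_is_optimal
    {S A : Type*} [Fintype S] [Fintype A] [Nonempty S] [Nonempty A]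
    (P : S → A → PMF S) (R : S → A → S → ℝ) (γ : ℝ) (hγ0 : 0 ≤ γ) (hγ1 : γ < 1)
    (Qstar : S × A → ℝ) (hQstar : bellman P R γ Qstar = Qstar)
    (πstar : S → A) (hgreedy : ∀ s : S, ∀ a : A, Qstar (s, a) ≤ Qstar (s, πstar s))
    (Qpi : (S → A) → S × A → ℝ)
    (hQpi : ∀ π : S → A, polEval P R γ π (Qpi π) = Qpi π) :
    Qpi πstar = Qstar ∧
    (∀ π : S → A, ∀ p : S × A, Qpi π p ≤ Qstar p) ∧
    (∃ πbest : S → A, ∀ π : S → A, ∀ p : S × A, Qpi π p ≤ Qpi πbest p) := by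
  have hbdd : ∀ s' : S, BddAbove (Set.range fun a' : A => Qstar (s', a')) :=
    fun s' => Set.Finite.bddAbove (Set.finite_range _)
  have hsup : ∀ s' : S, (⨆ a' : A, Qstar (s', a')) = Qstar (s', πstar s') := fun s' =>
    le_antisymm (ciSup_le fun a => hgreedy s' a) (le_ciSup (hbdd s') (πstar s'))
  have hpe : polEval P R γ πstar Qstar = Qstar := by
    funext p
    conv_rhs => rw [← hQstar]
    simp only [polEval, bellman, hsup]
  have hdom : ∀ π : S → A, ∀ p : S × A, Qpi π p ≤ Qstar p := by
    intro π
    apply key_contraction P R γ hγ0 hγ1 π _ _ (hQpi π)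
    intro p
    conv_rhs => rw [← hQstar]
    simp only [polEval, bellman]
    apply Finset.sum_le_sum
    intro s' _
    apply mul_le_mul_of_nonneg_left _ ENNReal.toReal_nonneg
    apply add_le_add_right
    exact mul_le_mul_of_nonneg_left (le_ciSup (hbdd s') (π s')) hγ0
  have heq : Qpi πstar = Qstar := by
    funext p
    refine le_antisymm (hdom πstar p) ?_
    exact key_contraction P R γ hγ0 hγ1 πstar Qstar (Qpi πstar) hpe
      (fun q => le_of_eq (congrFun (hQpi πstar) q)) p
  exact ⟨heq, hdom, ⟨πstar, fun π p => heq ▸ hdom π p⟩⟩
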